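/- arXiv:math/0409119 — 3 statements merged into one kernel-verified Lean document; each statement's English description precedes it below -/
import Mathlib

section
/- Let M be a simply invariant subspace of RL^2, and let U be an element of the orthogonal complement of e^{iθ}M within M (i.e. U ∈ M and U is orthogonal to e^{iθ}M) with ‖U‖_2 = 1. Then |U| = 1 almost everywhere on T. -/
open MeasureTheory Complex
open scoped NNReal

noncomputable section

instance : Fact (0 < 2 * Real.pi) := ⟨Real.two_pi_pos⟩

/-- The unit circle, modelled as `ℝ / 2πℤ`, with normalized Haar (Lebesgue) measure
of total mass `1`. -/
abbrev 𝕋 : Type := AddCircle (2 * Real.pi)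

abbrev μT : Measure 𝕋 := AddCircle.haarAddCircle

/-- `RL²`: the set of `f ∈ L²` all of whose Fourier coefficients are real. -/
def RL2 : Set (Lp ℂ 2 μT) :=
  {f | ∀ n : ℤ, (fourierCoeff (f : 𝕋 → ℂ) n).im = 0}

/-- The image `e^{iθ}·M` of a set `M ⊆ L²` under multiplication by the coordinate function. -/
def shiftSet (M : Set (Lp ℂ 2 μT)) : Set (Lp ℂ 2 μT) :=
  {g | ∃ f ∈ M, (g : 𝕋 → ℂ) =ᵐ[μT] fun t => fourier 1 t * (f : 𝕋 → ℂ) t}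

/- ### Auxiliary lemmas -/

lemma norm_fourier_apply_le (n : ℤ) (t : 𝕋) : ‖fourier n t‖ ≤ 1 := by
  have h := (fourier (T := 2 * Real.pi) n).norm_coe_le_norm t
  rwa [fourier_norm] at h

lemma fourier_mul_memLp (n : ℤ) (f : Lp ℂ 2 μT) :
    MemLp (fun t => fourier n t * (f : 𝕋 → ℂ) t) 2 μT := by
  refine MemLp.of_le_mul (c := 1) (Lp.memLp f)
    (((map_continuous (fourier n)).aestronglyMeasurable).mul (Lp.aestronglyMeasurable f)) ?_
  filter_upwards with t
  rw [norm_mul, one_mul]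
  exact mul_le_of_le_one_left (norm_nonneg _) (norm_fourier_apply_le n t)

lemma integral_fourier_eq_zero {n : ℤ} (hn : n ≠ 0) :
    ∫ t, fourier n t ∂μT = 0 :=
  integral_eq_zero_of_add_right_eq_neg (μ := μT)
    (fourier_add_half_inv_index hn Real.two_pi_pos)

set_option maxHeartbeats 1000000 in
/-- Let `M` be a simply invariant subspace of `RL²` and let `U ∈ M` with `‖U‖₂ = 1` be
orthogonal to `e^{iθ}M` (with respect to the inner product `⟨f,g⟩ = ∫ f ⋅ conj g dθ/2π`).
Then `|U| = 1` almost everywhere. -/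
theorem unimodular_of_orthogonal_shift
    (M : Submodule ℝ (Lp ℂ 2 μT))
    (hMsub : (M : Set (Lp ℂ 2 μT)) ⊆ RL2)
    (hMclosed : IsClosed (M : Set (Lp ℂ 2 μT)))
    (hMinv : shiftSet (M : Set (Lp ℂ 2 μT)) ⊂ (M : Set (Lp ℂ 2 μT)))
    (U : Lp ℂ 2 μT) (hUM : U ∈ M) (hUnorm : ‖U‖ = 1)
    (hUorth : ∀ g ∈ M,
      ∫ t, (U : 𝕋 → ℂ) t * starRingEnd ℂ (fourier 1 t * (g : 𝕋 → ℂ) t) ∂μT = 0) :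
    ∀ᵐ t ∂μT, ‖(U : 𝕋 → ℂ) t‖ = 1 := by
  set u : 𝕋 → ℂ := (U : 𝕋 → ℂ) with hu
  -- Powers `e^{int} U` belong to `M`.
  have hpow : ∀ n : ℕ, ∃ g, g ∈ M ∧ (g : 𝕋 → ℂ) =ᵐ[μT] fun t => fourier (n : ℤ) t * u t := by
    intro n
    induction n with
    | zero =>
      refine ⟨U, hUM, ?_⟩
      filter_upwards with t
      simp [fourier_zero, hu]
    | succ n ih =>
      obtain ⟨g, hg, hge⟩ := ih
      refine ⟨(fourier_mul_memLp 1 g).toLp _,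
        hMinv.subset ⟨g, hg, (fourier_mul_memLp 1 g).coeFn_toLp⟩, ?_⟩
      filter_upwards [(fourier_mul_memLp 1 g).coeFn_toLp, hge] with t h1 h2
      rw [h1, h2, show ((n + 1 : ℕ) : ℤ) = 1 + (n : ℤ) by push_cast; ring, fourier_add,
        mul_assoc]
  -- The function `v = |U|²` and its integrability.
  set v : 𝕋 → ℂ := fun t => u t * (starRingEnd ℂ) (u t) with hv
  have hInt_v : Integrable v μT := by
    have h := L2.integrable_inner (𝕜 := ℂ) U U
    simp only [RCLike.inner_apply] at h
    have : v = fun a => (starRingEnd ℂ) (u a) * u a := funext fun a => mul_comm _ _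
    exact h
  have hconjv : ∀ t, (starRingEnd ℂ) (v t) = v t := by
    intro t
    simp only [hv, map_mul, Complex.conj_conj]
    ring
  -- The zeroth Fourier coefficient of `v` is `1`.
  have hA0 : ∫ t, v t ∂μT = 1 := by
    have h1 : (inner ℂ U U : ℂ) = ∫ t, (starRingEnd ℂ) (u t) * u t ∂μT := by
      rw [L2.inner_def]
      simp only [RCLike.inner_apply]
      exact integral_congr_ae (Filter.Eventually.of_forall fun t => mul_comm _ _)
    have h2 : (inner ℂ U U : ℂ) = 1 := by
      rw [inner_self_eq_norm_sq_to_K, hUnorm]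
      norm_num
    calc ∫ t, v t ∂μT = ∫ t, (starRingEnd ℂ) (u t) * u t ∂μT := by
          apply integral_congr_ae; filter_upwards with t; rw [hv]; ring
      _ = 1 := by rw [← h1, h2]
  -- Negative Fourier coefficients of `v` vanish by orthogonality.
  have hAneg : ∀ n : ℕ, ∫ t, v t * fourier (-((n : ℤ) + 1)) t ∂μT = 0 := by
    intro n
    obtain ⟨g, hg, hge⟩ := hpow n
    have h0 := hUorth g hg
    rw [← h0]
    apply integral_congr_ae
    filter_upwards [hge] with t h2
    rw [h2, map_mul, map_mul]
    have hfe : (fourier (-((n : ℤ) + 1)) t : ℂ)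
        = (starRingEnd ℂ) (fourier 1 t) * (starRingEnd ℂ) (fourier (n : ℤ) t) := by
      rw [← fourier_neg (n := 1), ← fourier_neg (n := (n : ℤ)), ← fourier_add]
      congr 1
      ring
    rw [hfe, hv]
    ring
  -- Conjugation symmetry gives vanishing of positive coefficients, too.
  have hAsym : ∀ n : ℤ, ∫ t, v t * fourier n t ∂μT
      = (starRingEnd ℂ) (∫ t, v t * fourier (-n) t ∂μT) := by
    intro n
    rw [← integral_conj]
    apply integral_congr_ae
    filter_upwards with t
    rw [map_mul, hconjv t, fourier_neg, Complex.conj_conj]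
  have hAne : ∀ n : ℤ, n ≠ 0 → ∫ t, v t * fourier n t ∂μT = 0 := by
    intro n hn
    rcases lt_or_gt_of_ne hn with hlt | hgt
    · obtain ⟨m, hm⟩ : ∃ m : ℕ, n = -((m : ℤ) + 1) := ⟨(-n - 1).toNat, by omega⟩
      rw [hm]
      exact hAneg m
    · obtain ⟨m, hm⟩ : ∃ m : ℕ, -n = -((m : ℤ) + 1) := ⟨(n - 1).toNat, by omega⟩
      rw [hAsym, hm, hAneg m, map_zero]
  -- The function `h = v - 1` has all Fourier coefficients zero.
  set h : 𝕋 → ℂ := fun t => v t - 1 with hh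
  have hInth : Integrable h μT := hInt_v.sub (integrable_const 1)
  have hInt_vf : ∀ n : ℤ, Integrable (fun t => fourier n t * v t) μT := fun n =>
    hInt_v.bdd_mul ((map_continuous (fourier n)).aestronglyMeasurable)
      (Filter.Eventually.of_forall fun t => norm_fourier_apply_le n t)
  have hInt_f : ∀ n : ℤ, Integrable (fun t => fourier n t) μT := by
    intro n
    have := (integrable_const (μ := μT) (1 : ℂ)).bdd_mul
      ((map_continuous (fourier (T := 2 * Real.pi) n)).aestronglyMeasurable)
      (Filter.Eventually.of_forall fun t => norm_fourier_apply_le n t)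
    simpa using this
  have hcoef : ∀ n : ℤ, ∫ t, fourier n t * h t ∂μT = 0 := by
    intro n
    have hcomm : ∫ t, fourier n t * v t ∂μT = ∫ t, v t * fourier n t ∂μT :=
      integral_congr_ae (Filter.Eventually.of_forall fun t => mul_comm _ _)
    have hsplit : ∫ t, fourier n t * h t ∂μT
        = (∫ t, fourier n t * v t ∂μT) - ∫ t, fourier n t ∂μT := by
      rw [← integral_sub (hInt_vf n) (hInt_f n)]
      apply integral_congr_ae
      filter_upwards with t
      rw [hh]
      ring
    rcases eq_or_ne n 0 with rfl | hn
    · have hv0 : ∫ t, fourier (0 : ℤ) t * v t ∂μT = 1 := by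
        rw [← hA0]
        apply integral_congr_ae
        filter_upwards with t
        rw [fourier_zero, one_mul]
      have hf0 : ∫ t, fourier (0 : ℤ) t ∂μT = 1 := by
        have he : (fun t : 𝕋 => fourier (0 : ℤ) t) = fun _ => (1 : ℂ) := by
          funext t; exact fourier_zero
        rw [he]; simp
      rw [hsplit, hv0, hf0, sub_self]
    · rw [hsplit, hcomm, hAne n hn, integral_fourier_eq_zero hn, sub_self]
  -- Integrals against all continuous functions vanish, by density of trigonometric polynomials.
  have hbd : ∀ c : C(𝕋, ℂ), Integrable (fun t => c t * h t) μT := fun c =>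
    hInth.bdd_mul c.continuous.aestronglyMeasurable (Filter.Eventually.of_forall fun x => c.norm_coe_le_norm x)
  let L0 : C(𝕋, ℂ) →ₗ[ℂ] ℂ :=
    { toFun := fun c => ∫ t, c t * h t ∂μT
      map_add' := fun c d => by
        simp only [ContinuousMap.add_apply, add_mul]
        exact integral_add (hbd c) (hbd d)
      map_smul' := fun r c => by
        simp only [ContinuousMap.smul_apply, smul_eq_mul, mul_assoc, RingHom.id_apply]
        exact integral_const_mul r _ }
  let L : C(𝕋, ℂ) →L[ℂ] ℂ := L0.mkContinuous (∫ t, ‖h t‖ ∂μT) (by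
    intro c
    calc ‖∫ t, c t * h t ∂μT‖ ≤ ∫ t, ‖c t * h t‖ ∂μT := norm_integral_le_integral_norm _
      _ ≤ ∫ t, ‖c‖ * ‖h t‖ ∂μT := by
          refine integral_mono (hbd c).norm (hInth.norm.const_mul _) fun t => ?_
          rw [norm_mul]
          exact mul_le_mul_of_nonneg_right (c.norm_coe_le_norm t) (norm_nonneg _)
      _ = (∫ t, ‖h t‖ ∂μT) * ‖c‖ := by rw [integral_const_mul]; ring)
  have hL0 : ∀ c : C(𝕋, ℂ), ∫ t, c t * h t ∂μT = 0 := by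
    have hker : (Submodule.span ℂ
        (Set.range (fourier (T := 2 * Real.pi)))).topologicalClosure ≤ LinearMap.ker (L : C(𝕋, ℂ) →ₗ[ℂ] ℂ) := by
      apply Submodule.topologicalClosure_minimal
      · rw [Submodule.span_le]
        rintro _ ⟨n, rfl⟩
        exact LinearMap.mem_ker.mpr (hcoef n)
      · exact ContinuousLinearMap.isClosed_ker L
    intro c
    have hc : c ∈ (Submodule.span ℂ
        (Set.range (fourier (T := 2 * Real.pi)))).topologicalClosure := by
      rw [span_fourier_closure_eq_top]
      trivial
    exact LinearMap.mem_ker.mp (hker hc)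
  -- Hence the integral of `h` over every closed set vanishes.
  have hclosed : ∀ s : Set 𝕋, IsClosed s → ∫ t in s, h t ∂μT = 0 := by
    intro s hs
    have δpos : ∀ n : ℕ, (0 : ℝ) < 1 / (n + 1) := fun n => by positivity
    set f : ℕ → BoundedContinuousFunction 𝕋 ℝ≥0 := fun n => thickenedIndicator (δpos n) s with hf
    have hptw : ∀ t : 𝕋, Filter.Tendsto (fun n => (f n) t) Filter.atTop
        (nhds (Set.indicator s (fun _ => (1 : ℝ≥0)) t)) := by
      have hlim : Filter.Tendsto (fun n : ℕ => (1 : ℝ) / (n + 1)) Filter.atTop (nhds 0) :=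
        tendsto_one_div_add_atTop_nhds_zero_nat
      have := thickenedIndicator_tendsto_indicator_closure δpos hlim s
      rw [tendsto_pi_nhds] at this
      intro t
      have h2 := this t
      rwa [hs.closure_eq] at h2
    have key : Filter.Tendsto (fun n => ∫ t, (((f n) t : ℝ) : ℂ) * h t ∂μT) Filter.atTop
        (nhds (∫ t, Set.indicator s (fun _ => (1 : ℂ)) t * h t ∂μT)) := by
      apply tendsto_integral_of_dominated_convergence (fun t => ‖h t‖)
      · intro n
        exact (Complex.continuous_ofReal.comp
          (NNReal.continuous_coe.comp (f n).continuous)).aestronglyMeasurable.mul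
          hInth.aestronglyMeasurable
      · exact hInth.norm
      · intro n
        filter_upwards with t
        rw [norm_mul]
        have h1 : ‖(((f n) t : ℝ) : ℂ)‖ ≤ 1 := by
          have hle : ((f n) t : ℝ) ≤ 1 := by
            rw [hf]
            exact_mod_cast thickenedIndicator_le_one (δpos n) s t
          calc ‖(((f n) t : ℝ) : ℂ)‖ = |((f n) t : ℝ)| := by
                rw [Complex.norm_real, Real.norm_eq_abs]
            _ = ((f n) t : ℝ) := abs_of_nonneg ((f n) t).coe_nonneg
            _ ≤ 1 := hle
        exact mul_le_of_le_one_left (norm_nonneg _) h1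
      · filter_upwards with t
        have h2 : Filter.Tendsto (fun n => (((f n) t : ℝ) : ℂ)) Filter.atTop
            (nhds (Set.indicator s (fun _ => (1 : ℂ)) t)) := by
          have h3 : Filter.Tendsto (fun n => (((f n) t : ℝ) : ℂ)) Filter.atTop
              (nhds (((Set.indicator s (fun _ => (1 : ℝ≥0)) t : ℝ≥0) : ℝ) : ℂ)) :=
            (Complex.continuous_ofReal.comp NNReal.continuous_coe).continuousAt.tendsto.comp
              (hptw t)
          convert h3 using 2
          by_cases hts : t ∈ s <;> simp [hts]
        exact h2.mul tendsto_const_nhds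
    have hzero : ∀ n, ∫ t, (((f n) t : ℝ) : ℂ) * h t ∂μT = 0 := fun n =>
      hL0 ⟨fun t => (((f n) t : ℝ) : ℂ),
        Complex.continuous_ofReal.comp (NNReal.continuous_coe.comp (f n).continuous)⟩
    have hlim0 : ∫ t, Set.indicator s (fun _ => (1 : ℂ)) t * h t ∂μT = 0 := by
      refine tendsto_nhds_unique key ?_
      simp only [hzero]
      exact tendsto_const_nhds
    rw [← integral_indicator hs.measurableSet]
    rw [← hlim0]
    apply integral_congr_ae
    filter_upwards with t
    by_cases hts : t ∈ s <;> simp [Set.indicator_apply, hts]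
  have hae : h =ᵐ[μT] 0 :=
    ae_eq_zero_of_forall_setIntegral_isClosed_eq_zero hInth hclosed
  filter_upwards [hae] with t ht
  have hv1 : u t * (starRingEnd ℂ) (u t) = 1 := by
    have : h t = 0 := ht
    rw [hh] at this
    simpa [sub_eq_zero] using this
  have hns : (Complex.normSq (u t) : ℂ) = 1 := by rw [← Complex.mul_conj]; exact hv1
  have hns' : Complex.normSq (u t) = 1 := by exact_mod_cast hns
  rw [Complex.norm_def, hns', Real.sqrt_one]

end
end

section
/- Let U be a unimodular function in RL^2 (|U| = 1 almost everywhere). Then the closed linear span in RL^2 of the set { e^{inθ}U : n ∈ ℤ } is all of RL^2. -/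
open MeasureTheory Complex

open scoped InnerProductSpace

noncomputable section

/-- Fourier coefficients respect a.e. equality. -/
lemma fourierCoeff_congr_ae' {f g : 𝕋 → ℂ} (h : f =ᵐ[μT] g) (n : ℤ) :
    fourierCoeff f n = fourierCoeff g n := by
  unfold fourierCoeff
  exact integral_congr_ae (h.mono fun t ht => by simp only [ht])

/-- Multiplying by `fourier n` shifts Fourier coefficients. -/
lemma fourierCoeff_fourier_mul (f : 𝕋 → ℂ) (n m : ℤ) :
    fourierCoeff (fun t => fourier n t * f t) m = fourierCoeff f (m - n) := by
  unfold fourierCoeff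
  refine integral_congr_ae (Filter.Eventually.of_forall fun t => ?_)
  simp only [smul_eq_mul, ← mul_assoc, ← fourier_add]
  congr 2
  ring

/-- `RL2` as a real submodule of `L²`. -/
def RL2sub : Submodule ℝ (Lp ℂ 2 μT) where
  carrier := RL2
  zero_mem' := by
    intro n
    rw [← fourierBasis_repr]
    simp
  add_mem' := by
    intro a b ha hb n
    have ha' : (fourierBasis.repr a n).im = 0 := by rw [fourierBasis_repr]; exact ha n
    have hb' : (fourierBasis.repr b n).im = 0 := by rw [fourierBasis_repr]; exact hb n
    rw [← fourierBasis_repr, map_add, lp.coeFn_add, Pi.add_apply, Complex.add_im, ha', hb',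
      add_zero]
  smul_mem' := by
    intro r a ha n
    have ha' : (fourierBasis.repr a n).im = 0 := by rw [fourierBasis_repr]; exact ha n
    rw [← fourierBasis_repr, show r • a = (r : ℂ) • a from (Complex.coe_smul r a).symm,
      _root_.map_smul, lp.coeFn_smul, Pi.smul_apply, smul_eq_mul, Complex.mul_im]
    simp [ha']

lemma mem_RL2sub_iff (f : Lp ℂ 2 μT) : f ∈ RL2sub ↔ f ∈ RL2 := Iff.rfl

lemma isClosed_RL2 : IsClosed RL2 := by
  have h : RL2 = ⋂ n : ℤ, {f : Lp ℂ 2 μT | (fourierBasis.repr f n).im = 0} := by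
    ext f
    simp only [RL2, Set.mem_setOf_eq, Set.mem_iInter, fourierBasis_repr]
  rw [h]
  refine isClosed_iInter fun n => ?_
  have hlip : LipschitzWith 1 fun f : Lp ℂ 2 μT => fourierBasis.repr f n := by
    refine LipschitzWith.of_dist_le_mul fun f g => ?_
    rw [NNReal.coe_one, one_mul, dist_eq_norm, dist_eq_norm]
    calc ‖fourierBasis.repr f n - fourierBasis.repr g n‖
        = ‖fourierBasis.repr (f - g) n‖ := by
          rw [map_sub, lp.coeFn_sub, Pi.sub_apply]
      _ ≤ ‖fourierBasis.repr (f - g)‖ := lp.norm_apply_le_norm two_ne_zero _ n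
      _ = ‖f - g‖ := fourierBasis.repr.norm_map _
  have hc : Continuous fun f : Lp ℂ 2 μT => (fourierBasis.repr f n).im :=
    Complex.continuous_im.comp hlip.continuous
  exact isClosed_eq hc continuous_const

/-- The inner product of two elements of `RL2` is real. -/
lemma inner_im_zero {f g : Lp ℂ 2 μT} (hf : f ∈ RL2) (hg : g ∈ RL2) :
    (⟪f, g⟫_ℂ).im = 0 := by
  have hf' : ∀ n : ℤ, (fourierBasis.repr f n).im = 0 := fun n => by
    rw [fourierBasis_repr]; exact hf n
  have hg' : ∀ n : ℤ, (fourierBasis.repr g n).im = 0 := fun n => by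
    rw [fourierBasis_repr]; exact hg n
  have h1 : ⟪f, g⟫_ℂ = ⟪fourierBasis.repr f, fourierBasis.repr g⟫_ℂ :=
    (fourierBasis.repr.inner_map_map f g).symm
  have hsum := lp.summable_inner (𝕜 := ℂ) (fourierBasis.repr f) (fourierBasis.repr g)
  rw [h1, lp.inner_eq_tsum, ← Complex.imCLM_apply, ContinuousLinearMap.map_tsum _ hsum]
  convert tsum_zero with n
  rw [Complex.imCLM_apply]
  simp [RCLike.inner_apply, Complex.mul_im, hf' n, hg' n]

lemma norm_le_norm_sub_I_smul {a b : Lp ℂ 2 μT} (h : (⟪a, b⟫_ℂ).im = 0) :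
    ‖a‖ ≤ ‖a - I • b‖ := by
  have hre : RCLike.re ⟪a, I • b⟫_ℂ = 0 := by
    rw [inner_smul_right, RCLike.re_to_complex]
    simp [Complex.mul_re, h]
  have hsq := @norm_sub_sq ℂ _ _ _ _ a (I • b)
  rw [hre] at hsq
  nlinarith [norm_nonneg a, norm_nonneg (a - I • b), sq_nonneg ‖I • b‖]

lemma memℒp_mul_unimodular (U : Lp ℂ 2 μT)
    (hU : ∀ᵐ t ∂μT, ‖(U : 𝕋 → ℂ) t‖ = 1) {g : 𝕋 → ℂ}
    (hg : MemLp g 2 μT) : MemLp (fun t => g t * (U : 𝕋 → ℂ) t) 2 μT ∧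
      eLpNorm (fun t => g t * (U : 𝕋 → ℂ) t) 2 μT = eLpNorm g 2 μT := by
  have hnorm : ∀ᵐ t ∂μT, ‖g t * (U : 𝕋 → ℂ) t‖ = ‖g t‖ :=
    hU.mono fun t ht => by simp [ht]
  have heq : eLpNorm (fun t => g t * (U : 𝕋 → ℂ) t) 2 μT = eLpNorm g 2 μT :=
    eLpNorm_congr_norm_ae hnorm
  exact ⟨⟨hg.1.mul (Lp.aestronglyMeasurable U), by rw [heq]; exact hg.2⟩, heq⟩

/-- Multiplication by a unimodular `U` as a linear isometry of `L²`. -/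
def mulU (U : Lp ℂ 2 μT)
    (hU : ∀ᵐ t ∂μT, ‖(U : 𝕋 → ℂ) t‖ = 1) :
    Lp ℂ 2 μT →ₗᵢ[ℂ] Lp ℂ 2 μT where
  toFun g := (memℒp_mul_unimodular U hU (Lp.memLp g)).1.toLp _
  map_add' g h := by
    rw [← MemLp.toLp_add]
    refine MemLp.toLp_congr _ _ ?_
    filter_upwards [Lp.coeFn_add g h] with t ht
    simp only [ht, Pi.add_apply, add_mul]
  map_smul' c g := by
    simp only [RingHom.id_apply]
    rw [← MemLp.toLp_const_smul]
    refine MemLp.toLp_congr _ _ ?_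
    filter_upwards [Lp.coeFn_smul c g] with t ht
    simp only [ht, Pi.smul_apply, smul_eq_mul]
    ring
  norm_map' g := by
    simp only [LinearMap.coe_mk, AddHom.coe_mk]
    rw [Lp.norm_toLp (fun t => (g : 𝕋 → ℂ) t * (U : 𝕋 → ℂ) t)
      (memℒp_mul_unimodular U hU (Lp.memLp g)).1,
      (memℒp_mul_unimodular U hU (Lp.memLp g)).2, ← Lp.norm_def]

lemma coeFn_mulU (U : Lp ℂ 2 μT)
    (hU : ∀ᵐ t ∂μT, ‖(U : 𝕋 → ℂ) t‖ = 1) (g : Lp ℂ 2 μT) :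
    (mulU U hU g : 𝕋 → ℂ) =ᵐ[μT] fun t => (g : 𝕋 → ℂ) t * (U : 𝕋 → ℂ) t :=
  MemLp.coeFn_toLp (memℒp_mul_unimodular U hU (Lp.memLp g)).1

/-- Let `U` be a unimodular function in `RL²`.  Then the closed (real) linear span in `RL²`
of the set `{e^{inθ}U : n ∈ ℤ}` is all of `RL²`. -/
theorem span_shifts_of_unimodular_dense
    (U : Lp ℂ 2 μT)
    (hUreal : ∀ n : ℤ, (fourierCoeff (U : 𝕋 → ℂ) n).im = 0)
    (hUuni : ∀ᵐ t ∂μT, ‖(U : 𝕋 → ℂ) t‖ = 1) :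
    closure (↑(Submodule.span ℝ
        {g : Lp ℂ 2 μT | ∃ n : ℤ,
          (g : 𝕋 → ℂ) =ᵐ[μT] fun t => fourier n t * (U : 𝕋 → ℂ) t}) : Set (Lp ℂ 2 μT))
      = RL2 := by
  set S : Set (Lp ℂ 2 μT) :=
    {g : Lp ℂ 2 μT | ∃ n : ℤ,
      (g : 𝕋 → ℂ) =ᵐ[μT] fun t => fourier n t * (U : 𝕋 → ℂ) t} with hS_def
  have hS : S ⊆ RL2 := by
    rintro g ⟨n, hgn⟩ m
    rw [fourierCoeff_congr_ae' hgn m, fourierCoeff_fourier_mul]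
    exact hUreal (m - n)
  have hspan : Submodule.span ℝ S ≤ RL2sub := Submodule.span_le.2 hS
  refine Set.Subset.antisymm (closure_minimal hspan isClosed_RL2) ?_
  -- density direction
  intro f hf
  rw [Metric.mem_closure_iff]
  intro ε hε
  -- the element g = f * conj U of L²
  have hgmem : MemLp (fun t => (f : 𝕋 → ℂ) t * starRingEnd ℂ ((U : 𝕋 → ℂ) t)) 2 μT := by
    have hnorm : ∀ᵐ t ∂μT,
        ‖(f : 𝕋 → ℂ) t * starRingEnd ℂ ((U : 𝕋 → ℂ) t)‖ = ‖(f : 𝕋 → ℂ) t‖ :=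
      hUuni.mono fun t ht => by simp [ht]
    refine ⟨(Lp.aestronglyMeasurable f).mul ?_, ?_⟩
    · exact Complex.continuous_conj.comp_aestronglyMeasurable (Lp.aestronglyMeasurable U)
    · rw [eLpNorm_congr_norm_ae hnorm]
      exact (Lp.memLp f).2
  set g : Lp ℂ 2 μT := hgmem.toLp _ with hg_def
  have hMg : mulU U hUuni g = f := by
    apply Lp.ext
    filter_upwards [coeFn_mulU U hUuni g, hgmem.coeFn_toLp, hUuni] with t h1 h2 h3
    rw [h1, h2, mul_assoc]
    have : starRingEnd ℂ ((U : 𝕋 → ℂ) t) * (U : 𝕋 → ℂ) t = 1 := by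
      rw [mul_comm, Complex.mul_conj, Complex.normSq_eq_norm_sq, h3]
      norm_num
    rw [this, mul_one]
  set c : ℤ → ℂ := fun n => fourierBasis.repr g n with hc_def
  have hsum : HasSum (fun n : ℤ => c n • (fourierBasis n : Lp ℂ 2 μT)) g :=
    fourierBasis.hasSum_repr g
  obtain ⟨s, hs⟩ : ∃ s : Finset ℤ,
      ‖∑ n ∈ s, c n • (fourierBasis n : Lp ℂ 2 μT) - g‖ < ε := by
    have := Metric.tendsto_nhds.mp hsum ε hε
    obtain ⟨s, hs⟩ := this.exists
    exact ⟨s, by rwa [dist_eq_norm] at hs⟩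
  set M := mulU U hUuni with hM_def
  set y : Lp ℂ 2 μT := ∑ n ∈ s, (c n).re • M (fourierLp 2 n) with hy_def
  set z : Lp ℂ 2 μT := ∑ n ∈ s, (c n).im • M (fourierLp 2 n) with hz_def
  have hSmem : ∀ n : ℤ, M (fourierLp 2 n) ∈ S := by
    intro n
    refine ⟨n, ?_⟩
    filter_upwards [coeFn_mulU U hUuni (fourierLp 2 n),
      coeFn_fourierLp 2 n] with t h1 h2
    rw [h1, h2]
  have hy_span : y ∈ Submodule.span ℝ S :=
    Submodule.sum_mem _ fun n _ =>
      Submodule.smul_mem _ _ (Submodule.subset_span (hSmem n))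
  have hz_span : z ∈ Submodule.span ℝ S :=
    Submodule.sum_mem _ fun n _ =>
      Submodule.smul_mem _ _ (Submodule.subset_span (hSmem n))
  have hyz : M (∑ n ∈ s, c n • (fourierBasis n : Lp ℂ 2 μT)) = y + I • z := by
    rw [map_sum, hy_def, hz_def, Finset.smul_sum, ← Finset.sum_add_distrib]
    refine Finset.sum_congr rfl fun n _ => ?_
    have hbn : (fourierBasis n : Lp ℂ 2 μT) = fourierLp 2 n := by
      rw [← coe_fourierBasis]
    rw [_root_.map_smul, hbn]
    rw [show ((c n).re) • M (fourierLp 2 n) = ((c n).re : ℂ) • M (fourierLp 2 n) from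
        (Complex.coe_smul _ _).symm, show ((c n).im) • M (fourierLp 2 n) = ((c n).im : ℂ) • M (fourierLp 2 n) from
        (Complex.coe_smul _ _).symm, smul_smul, ← add_smul]
    congr 1
    rw [mul_comm]
    exact (Complex.re_add_im (c n)).symm
  have hfy : f - y ∈ RL2 := by
    have : f - y ∈ RL2sub := Submodule.sub_mem _ hf (hspan hy_span)
    exact this
  have hz2 : z ∈ RL2 := hspan hz_span
  have key : ‖f - y‖ ≤ ‖f - M (∑ n ∈ s, c n • (fourierBasis n : Lp ℂ 2 μT))‖ := by
    have heq : f - M (∑ n ∈ s, c n • (fourierBasis n : Lp ℂ 2 μT))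
        = (f - y) - I • z := by
      rw [hyz, sub_add_eq_sub_sub]
    rw [heq]
    exact norm_le_norm_sub_I_smul (inner_im_zero hfy hz2)
  have hlt : ‖f - M (∑ n ∈ s, c n • (fourierBasis n : Lp ℂ 2 μT))‖ < ε := by
    rw [← hMg, ← map_sub, M.norm_map, norm_sub_rev]
    exact hs
  exact ⟨y, hy_span, by rw [dist_eq_norm]; exact lt_of_le_of_lt key hlt⟩

end
end

section
/- Let M be a doubly invariant subspace of RL^2 with 1 ∉ M, and let q be the orthogonal projection of the constant function 1 onto M. Then q = |q|^2 almost everywhere on T; consequently q takes only the values 0 and 1 almost everywhere, i.e. q is the characteristic function of a measurable subset E of T. -/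
open MeasureTheory Complex

noncomputable section

/-- The constant function `1` as an element of `L²` of the circle. -/
def oneL2 : Lp ℂ 2 μT := (memLp_const (1 : ℂ)).toLp fun _ => (1 : ℂ)

open Filter Set Topology NNReal in
/-- Let `M` be a doubly invariant subspace of `RL²` with `1 ∉ M`, and let `q` be the
orthogonal projection of the constant function `1` onto `M` (i.e. `q ∈ M` and `1 - q` is
orthogonal to `M`).  Then `q = |q|²` almost everywhere; consequently `q` takes only the
values `0` and `1` almost everywhere, i.e. `q` is the characteristic function of a
measurable subset `E` of the circle. -/
theorem projection_is_indicator
    (M : Submodule ℝ (Lp ℂ 2 μT))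
    (hMsub : (M : Set (Lp ℂ 2 μT)) ⊆ RL2)
    (hMclosed : IsClosed (M : Set (Lp ℂ 2 μT)))
    (hMinv : shiftSet (M : Set (Lp ℂ 2 μT)) = (M : Set (Lp ℂ 2 μT)))
    (hone : oneL2 ∉ M)
    (q : Lp ℂ 2 μT) (hqM : q ∈ M)
    (hqproj : ∀ g ∈ M,
      ∫ t, ((1 : ℂ) - (q : 𝕋 → ℂ) t) * starRingEnd ℂ ((g : 𝕋 → ℂ) t) ∂μT = 0) :
    ((q : 𝕋 → ℂ) =ᵐ[μT] fun t => ((‖(q : 𝕋 → ℂ) t‖ : ℝ) : ℂ)^2) ∧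
    ∃ E : Set 𝕋, MeasurableSet E ∧
      (q : 𝕋 → ℂ) =ᵐ[μT] E.indicator (fun _ => (1 : ℂ)) := by
  set Q : 𝕋 → ℂ := (q : 𝕋 → ℂ) with hQdef
  set F : 𝕋 → ℂ := fun t => (1 - Q t) * (starRingEnd ℂ) (Q t) with hFdef
  -- forward shift stays in M
  have fwd : ∀ f : Lp ℂ 2 μT, f ∈ M → ∃ g, g ∈ M ∧
      (g : 𝕋 → ℂ) =ᵐ[μT] fun t => fourier 1 t * (f : 𝕋 → ℂ) t := by
    intro f hf
    have hmem : MemLp (fun t => fourier 1 t * (f : 𝕋 → ℂ) t) 2 μT := by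
      refine MemLp.of_le (Lp.memLp f)
        (((map_continuous (fourier 1)).aestronglyMeasurable).mul (Lp.aestronglyMeasurable f)) ?_
      filter_upwards with t
      rw [norm_mul]
      have h1 : ‖fourier (T := 2 * Real.pi) 1 t‖ = 1 := Circle.norm_coe _
      rw [h1, one_mul]
    refine ⟨hmem.toLp _, ?_, hmem.coeFn_toLp⟩
    have hmem' : hmem.toLp _ ∈ shiftSet (M : Set (Lp ℂ 2 μT)) := ⟨f, hf, hmem.coeFn_toLp⟩
    rwa [hMinv] at hmem'
  -- backward shift stays in M
  have bwd : ∀ f : Lp ℂ 2 μT, f ∈ M → ∃ g, g ∈ M ∧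
      (g : 𝕋 → ℂ) =ᵐ[μT] fun t => fourier (-1) t * (f : 𝕋 → ℂ) t := by
    intro f hf
    have hf' : f ∈ shiftSet (M : Set (Lp ℂ 2 μT)) := by rw [hMinv]; exact hf
    obtain ⟨g, hg, hfg⟩ := hf'
    refine ⟨g, hg, ?_⟩
    filter_upwards [hfg] with t ht
    rw [ht, ← mul_assoc, ← fourier_add]
    norm_num
  -- all integer shifts of q, up to a.e. equality, belong to M
  have key : ∀ n : ℤ, ∃ g, g ∈ M ∧ (g : 𝕋 → ℂ) =ᵐ[μT] fun t => fourier n t * Q t := by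
    intro n
    induction n using Int.induction_on with
    | zero => exact ⟨q, hqM, by filter_upwards with t; rw [fourier_zero, one_mul]⟩
    | succ k ih =>
      obtain ⟨g, hg, hgq⟩ := ih
      obtain ⟨g', hg', h'⟩ := fwd g hg
      refine ⟨g', hg', ?_⟩
      filter_upwards [h', hgq] with t h1 h2
      rw [h1, h2, ← mul_assoc, ← fourier_add, show (1 : ℤ) + (k : ℤ) = (k : ℤ) + 1 from add_comm (1:ℤ) (k:ℤ)]
    | pred k ih =>
      obtain ⟨g, hg, hgq⟩ := ih
      obtain ⟨g', hg', h'⟩ := bwd g hg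
      refine ⟨g', hg', ?_⟩
      filter_upwards [h', hgq] with t h1 h2
      rw [h1, h2, ← mul_assoc, ← fourier_add, show (-1 : ℤ) + -(k : ℤ) = -(k : ℤ) - 1 by ring]
  -- all "Fourier coefficients" of F vanish
  have coeffs : ∀ n : ℤ, ∫ t, fourier n t * F t ∂μT = 0 := by
    intro n
    obtain ⟨g, hg, hgq⟩ := key (-n)
    have h0 := hqproj g hg
    have hcong : (fun t => ((1 : ℂ) - Q t) * (starRingEnd ℂ) ((g : 𝕋 → ℂ) t))
        =ᵐ[μT] fun t => fourier n t * F t := by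
      filter_upwards [hgq] with t ht
      rw [ht, map_mul]
      have h2 : (starRingEnd ℂ) (fourier (T := 2 * Real.pi) (-n) t) = fourier n t := by
        rw [fourier_neg, Complex.conj_conj]
      rw [h2, hFdef]
      ring
    rw [← integral_congr_ae hcong]
    exact h0
  -- F is integrable (product of two L² functions)
  have hFint : Integrable F μT := by
    have h1 := MeasureTheory.L2.integrable_inner (𝕜 := ℂ) q (oneL2 - q)
    refine h1.congr ?_
    have h3 : (oneL2 : 𝕋 → ℂ) =ᵐ[μT] fun _ => (1 : ℂ) := (memLp_const (1 : ℂ)).coeFn_toLp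
    filter_upwards [Lp.coeFn_sub oneL2 q, h3] with t ht2 ht3
    rw [RCLike.inner_apply, ht2, Pi.sub_apply, ht3, hFdef]
  -- every continuous test function integrates F to zero
  have hg_int : ∀ g : C(𝕋, ℂ), Integrable (fun t => g t * F t) μT := by
    intro g
    exact hFint.bdd_mul g.continuous.aestronglyMeasurable (c := ‖g‖) (Eventually.of_forall fun x => g.norm_coe_le_norm x)
  let L : C(𝕋, ℂ) →ₗ[ℂ] ℂ :=
    { toFun := fun g => ∫ t, g t * F t ∂μT
      map_add' := by
        intro g h
        show ∫ t, (g + h) t * F t ∂μT = (∫ t, g t * F t ∂μT) + ∫ t, h t * F t ∂μT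
        simp only [ContinuousMap.add_apply, add_mul]
        exact integral_add (hg_int g) (hg_int h)
      map_smul' := by
        intro c g
        show ∫ t, (c • g) t * F t ∂μT = c • ∫ t, g t * F t ∂μT
        simp only [ContinuousMap.smul_apply, smul_eq_mul, mul_assoc]
        exact integral_const_mul c _ }
  have hLbound : ∀ g : C(𝕋, ℂ), ‖L g‖ ≤ (∫ t, ‖F t‖ ∂μT) * ‖g‖ := by
    intro g
    have hb : ‖∫ t, g t * F t ∂μT‖ ≤ ∫ t, ‖g t * F t‖ ∂μT := norm_integral_le_integral_norm _
    refine hb.trans ?_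
    have hb2 : ∫ t, ‖g t * F t‖ ∂μT ≤ ∫ t, ‖g‖ * ‖F t‖ ∂μT := by
      refine integral_mono_of_nonneg (Eventually.of_forall fun t => norm_nonneg _)
        (hFint.norm.const_mul _) (Eventually.of_forall fun t => ?_)
      show ‖g t * F t‖ ≤ ‖g‖ * ‖F t‖
      rw [norm_mul]
      exact mul_le_mul_of_nonneg_right (g.norm_coe_le_norm t) (norm_nonneg _)
    refine hb2.trans_eq ?_
    rw [integral_const_mul, mul_comm]
  let φ : C(𝕋, ℂ) →L[ℂ] ℂ := LinearMap.mkContinuous L (∫ t, ‖F t‖ ∂μT) hLbound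
  have hker : ∀ g : C(𝕋, ℂ), ∫ t, g t * F t ∂μT = 0 := by
    intro g
    have htop : (Submodule.span ℂ (Set.range (@fourier (2 * Real.pi)))).topologicalClosure ≤
        φ.ker := by
      refine Submodule.topologicalClosure_minimal _ ?_ (ContinuousLinearMap.isClosed_ker φ)
      rw [Submodule.span_le]
      rintro _ ⟨n, rfl⟩
      simpa [φ, L, LinearMap.mem_ker, LinearMap.mkContinuous_apply] using coeffs n
    have hmem : g ∈ φ.ker := htop (by rw [span_fourier_closure_eq_top]; trivial)
    simpa [φ, L, LinearMap.mem_ker, LinearMap.mkContinuous_apply] using hmem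
  -- hence F has zero integral on every closed set
  have hclosedsets : ∀ s : Set 𝕋, IsClosed s → ∫ t in s, F t ∂μT = 0 := by
    intro s hs
    set fs := hs.apprSeq with hfs
    have hbd : ∀ n x, fs n x ≤ 1 := HasOuterApproxClosed.apprSeq_apply_le_one hs
    have hlim := HasOuterApproxClosed.tendsto_apprSeq hs
    rw [tendsto_pi_nhds] at hlim
    have hptw : ∀ x, Tendsto (fun n => ((fs n x : ℝ) : ℂ) * F x) atTop
        (𝓝 (Set.indicator s (fun _ => (1 : ℂ)) x * F x)) := by
      intro x
      have h1 : Tendsto (fun n => ((fs n x : ℝ) : ℂ)) atTop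
          (𝓝 (((Set.indicator s (fun _ => (1 : ℝ≥0)) x : ℝ≥0) : ℝ) : ℂ)) :=
        (Complex.continuous_ofReal.comp NNReal.continuous_coe).continuousAt.tendsto.comp (hlim x)
      have h2 : ((((Set.indicator s (fun _ => (1 : ℝ≥0)) x : ℝ≥0)) : ℝ) : ℂ)
          = Set.indicator s (fun _ => (1 : ℂ)) x := by
        by_cases hx : x ∈ s <;> simp [hx]
      rw [h2] at h1
      exact h1.mul_const (F x)
    have hmeas : ∀ n : ℕ, AEStronglyMeasurable (fun x => ((fs n x : ℝ) : ℂ) * F x) μT := by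
      intro n
      exact ((Complex.continuous_ofReal.comp
        (NNReal.continuous_coe.comp (fs n).continuous)).aestronglyMeasurable).mul
        hFint.aestronglyMeasurable
    have hbound : ∀ n : ℕ, ∀ᵐ x ∂μT, ‖((fs n x : ℝ) : ℂ) * F x‖ ≤ ‖F x‖ := by
      intro n
      filter_upwards with x
      rw [norm_mul]
      have h1 : ‖((fs n x : ℝ) : ℂ)‖ ≤ 1 := by
        rw [Complex.norm_real, Real.norm_of_nonneg (fs n x).coe_nonneg]
        exact_mod_cast hbd n x
      calc ‖((fs n x : ℝ) : ℂ)‖ * ‖F x‖ ≤ 1 * ‖F x‖ :=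
            mul_le_mul_of_nonneg_right h1 (norm_nonneg _)
        _ = ‖F x‖ := one_mul _
    have hDCT := MeasureTheory.tendsto_integral_of_dominated_convergence
      (μ := μT) (F := fun n x => ((fs n x : ℝ) : ℂ) * F x)
      (f := fun x => Set.indicator s (fun _ => (1 : ℂ)) x * F x)
      (bound := fun x => ‖F x‖) hmeas hFint.norm hbound (Eventually.of_forall hptw)
    have hzero : ∀ n : ℕ, ∫ x, ((fs n x : ℝ) : ℂ) * F x ∂μT = 0 := by
      intro n
      exact hker ⟨fun x => ((fs n x : ℝ) : ℂ),
        Complex.continuous_ofReal.comp (NNReal.continuous_coe.comp (fs n).continuous)⟩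
    simp_rw [hzero] at hDCT
    have hlim0 : ∫ x, Set.indicator s (fun _ => (1 : ℂ)) x * F x ∂μT = 0 :=
      tendsto_nhds_unique hDCT tendsto_const_nhds
    have hind : ∫ x, Set.indicator s (fun _ => (1 : ℂ)) x * F x ∂μT = ∫ t in s, F t ∂μT := by
      rw [← integral_indicator hs.measurableSet]
      congr 1
      ext x
      by_cases hx : x ∈ s <;> simp [hx]
    rw [← hind]
    exact hlim0
  -- conclude F = 0 a.e.
  have hF0 : F =ᵐ[μT] 0 := ae_eq_zero_of_forall_setIntegral_isClosed_eq_zero hFint hclosedsets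
  have hae : ∀ᵐ t ∂μT, ((1 : ℂ) - Q t) * (starRingEnd ℂ) (Q t) = 0 := by
    filter_upwards [hF0] with t ht
    simpa [hFdef] using ht
  constructor
  · filter_upwards [hae] with t ht
    have habs : ((‖Q t‖ : ℝ) : ℂ) ^ 2 = Q t * (starRingEnd ℂ) (Q t) := by
      rw [Complex.mul_conj, Complex.normSq_eq_norm_sq]
      push_cast
      ring
    show Q t = ((‖Q t‖ : ℝ) : ℂ) ^ 2
    rw [habs]
    have h2 := congrArg (starRingEnd ℂ) ht
    simp only [map_mul, map_sub, map_one, map_zero, Complex.conj_conj] at h2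
    linear_combination h2
  · refine ⟨Q ⁻¹' {1}, (Lp.stronglyMeasurable q).measurable (measurableSet_singleton 1), ?_⟩
    filter_upwards [hae] with t ht
    show Q t = Set.indicator (Q ⁻¹' {1}) (fun _ => (1 : ℂ)) t
    rcases mul_eq_zero.mp ht with h | h
    · have h1 : Q t = 1 := (sub_eq_zero.mp h).symm
      rw [Set.indicator_of_mem (show t ∈ Q ⁻¹' {1} from h1), h1]
    · have h0 : Q t = 0 := by
        have h2 := congrArg (starRingEnd ℂ) h
        simpa using h2
      rw [Set.indicator_of_notMem, h0]
      intro hc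
      rw [Set.mem_preimage, Set.mem_singleton_iff, h0] at hc
      exact zero_ne_one hc
end
end
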